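/- Let k be an algebraically closed field, n ≥ 1, m ≥ 1, λ ≥ 0, μ ≥ 0, δ, d integers. Give the polynomial ring S = k[u₀,…,uₙ,x,y,z] the ℕ×ℕ-valued weighting with weight (1,0) on each uᵢ, (0,1) on x, (λ,1) on y and (μ,m) on z, and let V(δ,d) ⊆ S be the k-subspace of polynomials that are weighted homogeneous of weight (δ,d). Assume d ≥ 3m, δ ≥ 2, δ ≥ 2λ and δ ≥ 2μ. Then for every a = (a₁,…,aₙ) ∈ kⁿ and every b, c ∈ k, the k-linear map V(δ,d) → k[u₁,…,uₙ,y,z]/(u₁,…,uₙ,y,z)³ sending f to the residue class of f(1, u₁+a₁, …, uₙ+aₙ, 1, y+b, z+c) is surjective. (This is the chart form of Lemma 3.8(1): the third restriction map r₃(p) of O_Q(δ,d) is surjective at every point p of the open set Uₓ = (x ≠ 0) of the P(1,1,m)-bundle Q over Pⁿ.) -/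

import Mathlib

open MvPolynomial


theorem aux_isWH_pow {σ R M : Type*} [CommSemiring R] [AddCommMonoid M] {w : σ → M}
    {p : MvPolynomial σ R} {m0 : M} (h : IsWeightedHomogeneous w p m0) (t : ℕ) :
    IsWeightedHomogeneous w (p ^ t) (t • m0) := by
  induction t with
  | zero => simpa using isWeightedHomogeneous_one R w
  | succ t ih => rw [pow_succ, succ_nsmul]; exact ih.mul h

theorem aux_monomial_mem_pow {σ R : Type*} [CommSemiring R] (e : σ →₀ ℕ) (r : R) :
    monomial e r ∈
      (Ideal.span (Set.range (X : σ → MvPolynomial σ R))) ^ (e.sum fun _ c => c) := by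
  induction e using Finsupp.induction with
  | zero => simp
  | single_add a b f hfa hb ih =>
    have hs : ((Finsupp.single a b + f).sum fun _ c => c) = b + f.sum fun _ c => c := by
      rw [Finsupp.sum_add_index' (fun _ => rfl) (fun _ _ _ => rfl), Finsupp.sum_single_index rfl]
    have hmono : (monomial (Finsupp.single a b + f) r : MvPolynomial σ R)
        = X a ^ b * monomial f r := by
      rw [X_pow_eq_monomial, monomial_mul, one_mul]
    rw [hs, hmono, pow_add]
    exact Ideal.mul_mem_mul (Ideal.pow_mem_pow (Ideal.subset_span (Set.mem_range_self a)) b) ih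

/-- Lemma 3.8(1), chart form: on the `P(1,1,m)`-bundle `Q` over `Pⁿ` with Cox
coordinates `u₀,…,uₙ,x,y,z` of bidegrees `(1,0),…,(1,0),(0,1),(λ,1),(μ,m)`, if
`d ≥ 3m`, `δ ≥ 2`, `δ ≥ 2λ` and `δ ≥ 2μ`, then the third restriction map
`r₃(p) : H⁰(Q, O_Q(δ,d)) → O_Q(δ,d) ⊗ (O_Q/m_p³)` is surjective at every point
`p` of `Uₓ = (x ≠ 0)`, written in the chart `u₀ ≠ 0`, `x ≠ 0` with chart
coordinates `u₁,…,uₙ,y,z`. -/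
theorem third_restriction_map_surjective_on_Ux
    {k : Type*} [Field k] [IsAlgClosed k]
    {n m lam μ : ℕ} (hn : 1 ≤ n) (hm : 1 ≤ m)
    (δ d : ℕ) (hd : 3 * m ≤ d) (hδ1 : 2 ≤ δ) (hδ2 : 2 * lam ≤ δ) (hδ3 : 2 * μ ≤ δ)
    -- the bigrading: `uᵢ ↦ (1,0)`, `x ↦ (0,1)`, `y ↦ (λ,1)`, `z ↦ (μ,m)`
    (w : Fin (n + 1) ⊕ Fin 3 → ℕ × ℕ)
    (hw : w = Sum.elim (fun _ => (1, 0)) ![(0, 1), (lam, 1), (μ, m)])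
    (a : Fin n → k) (b c : k) :
    ∀ t : MvPolynomial (Fin n ⊕ Fin 2) k,
      ∃ f : MvPolynomial (Fin (n + 1) ⊕ Fin 3) k,
        IsWeightedHomogeneous w f (δ, d) ∧
        Ideal.Quotient.mk
            ((Ideal.span (Set.range (X : Fin n ⊕ Fin 2 → MvPolynomial (Fin n ⊕ Fin 2) k))) ^ 3)
            (aeval
              (Sum.elim
                (fun i : Fin (n + 1) =>
                  Fin.cases 1 (fun j : Fin n => X (Sum.inl j) + C (a j)) i)
                ![1, X (Sum.inr 0) + C b, X (Sum.inr 1) + C c]) f) =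
          Ideal.Quotient.mk _ t := by
  subst hw
  set w : Fin (n + 1) ⊕ Fin 3 → ℕ × ℕ :=
    Sum.elim (fun _ => (1, 0)) ![(0, 1), (lam, 1), (μ, m)] with hw
  set S : Fin (n + 1) ⊕ Fin 3 → MvPolynomial (Fin n ⊕ Fin 2) k :=
    Sum.elim
      (fun i : Fin (n + 1) =>
        Fin.cases 1 (fun j : Fin n => X (Sum.inl j) + C (a j)) i)
      ![1, X (Sum.inr 0) + C b, X (Sum.inr 1) + C c] with hS
  -- the "linear forms" adapted to the point, and their bidegrees
  set W : Fin n ⊕ Fin 2 → ℕ × ℕ := Sum.elim (fun _ => (1, 0)) ![(lam, 1), (μ, m)] with hW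
  set g : Fin n ⊕ Fin 2 → MvPolynomial (Fin (n + 1) ⊕ Fin 3) k :=
    Sum.elim (fun i => X (Sum.inl i.succ) - C (a i) * X (Sum.inl 0))
      ![X (Sum.inr 1) - C b * X (Sum.inl 0) ^ lam * X (Sum.inr 0),
        X (Sum.inr 2) - C c * X (Sum.inl 0) ^ μ * X (Sum.inr 0) ^ m] with hg_def
  have hSx0 : S (Sum.inl 0) = 1 := rfl
  have hSinr0 : S (Sum.inr 0) = 1 := rfl
  have hg : ∀ v, IsWeightedHomogeneous w (g v) (W v) := by
    rintro (i | j)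
    · have h1 : IsWeightedHomogeneous w (X (Sum.inl i.succ) : MvPolynomial (Fin (n + 1) ⊕ Fin 3) k) ((1 : ℕ), (0 : ℕ)) := by
        simpa [hw] using isWeightedHomogeneous_X k w (Sum.inl i.succ)
      have h2 : IsWeightedHomogeneous w ((C (a i) * X (Sum.inl 0)) : MvPolynomial (Fin (n + 1) ⊕ Fin 3) k) ((1 : ℕ), (0 : ℕ)) := by
        simpa [hw] using (isWeightedHomogeneous_C w (a i)).mul (isWeightedHomogeneous_X k w (Sum.inl 0))
      rw [← mem_weightedHomogeneousSubmodule] at h1 h2 ⊢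
      exact Submodule.sub_mem _ h1 h2
    · fin_cases j
      · have h1 : IsWeightedHomogeneous w (X (Sum.inr 1) : MvPolynomial (Fin (n + 1) ⊕ Fin 3) k) ((lam : ℕ), (1 : ℕ)) := by
          simpa [hw] using isWeightedHomogeneous_X k w (Sum.inr 1)
        have h2 : IsWeightedHomogeneous w ((C b * X (Sum.inl 0) ^ lam * X (Sum.inr 0)) : MvPolynomial (Fin (n + 1) ⊕ Fin 3) k)
            ((lam : ℕ), (1 : ℕ)) := by
          have := ((isWeightedHomogeneous_C w b).mul
            (aux_isWH_pow (isWeightedHomogeneous_X k w (Sum.inl 0)) lam)).mul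
            (isWeightedHomogeneous_X k w (Sum.inr 0))
          simpa [hw, Prod.ext_iff] using this
        rw [← mem_weightedHomogeneousSubmodule] at h1 h2
        simpa [hW, hg_def] using Submodule.sub_mem _ h1 h2
      · have h1 : IsWeightedHomogeneous w (X (Sum.inr 2) : MvPolynomial (Fin (n + 1) ⊕ Fin 3) k) ((μ : ℕ), (m : ℕ)) := by
          simpa [hw] using isWeightedHomogeneous_X k w (Sum.inr 2)
        have h2 : IsWeightedHomogeneous w ((C c * X (Sum.inl 0) ^ μ * X (Sum.inr 0) ^ m) : MvPolynomial (Fin (n + 1) ⊕ Fin 3) k)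
            ((μ : ℕ), (m : ℕ)) := by
          have := ((isWeightedHomogeneous_C w c).mul
            (aux_isWH_pow (isWeightedHomogeneous_X k w (Sum.inl 0)) μ)).mul
            (aux_isWH_pow (isWeightedHomogeneous_X k w (Sum.inr 0)) m)
          simpa [hw, Prod.ext_iff] using this
        rw [← mem_weightedHomogeneousSubmodule] at h1 h2
        simpa [hW, hg_def] using Submodule.sub_mem _ h1 h2
  have hφg : ∀ v, aeval S (g v) = X v := by
    rintro (i | j)
    · simp [hg_def, hS]
    · fin_cases j <;> simp [hg_def, hS]
  intro t
  induction t using MvPolynomial.induction_on' with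
  | add p q hp hq =>
    obtain ⟨f, hf, hfe⟩ := hp
    obtain ⟨f', hf', hfe'⟩ := hq
    refine ⟨f + f', hf.add hf', ?_⟩
    rw [map_add, RingHom.map_add, RingHom.map_add, hfe, hfe']
  | monomial e r =>
    by_cases hdeg : (e.sum fun _ c => c) ≤ 2
    · -- small degree: explicit bihomogeneous lift
      set A : ℕ := e.sum fun v c => c * (W v).1 with hAdef
      set B : ℕ := e.sum fun v c => c * (W v).2 with hBdef
      have hW1 : ∀ v, 2 * (W v).1 ≤ δ := by
        rintro (i | j)
        · simpa [hW] using hδ1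
        · fin_cases j <;> simp [hW] <;> omega
      have hW2 : ∀ v, (W v).2 ≤ m := by
        rintro (i | j)
        · simp [hW]
        · fin_cases j <;> simp [hW] <;> omega
      have hA : A ≤ δ := by
        have h2A : 2 * A ≤ 2 * δ := by
          calc 2 * A = ∑ v ∈ e.support, 2 * (e v * (W v).1) := by
                rw [hAdef, Finsupp.sum, Finset.mul_sum]
            _ ≤ ∑ v ∈ e.support, e v * δ := by
                refine Finset.sum_le_sum fun v _ => ?_
                calc 2 * (e v * (W v).1) = e v * (2 * (W v).1) := by ring
                  _ ≤ e v * δ := Nat.mul_le_mul_left _ (hW1 v)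
            _ = (e.sum fun _ c => c) * δ := by rw [Finsupp.sum, Finset.sum_mul]
            _ ≤ 2 * δ := Nat.mul_le_mul_right _ hdeg
        omega
      have hB : B ≤ d := by
        have : B ≤ 2 * m := by
          calc B ≤ ∑ v ∈ e.support, e v * m := by
                rw [hBdef, Finsupp.sum]
                exact Finset.sum_le_sum fun v _ => Nat.mul_le_mul_left _ (hW2 v)
            _ = (e.sum fun _ c => c) * m := by rw [Finsupp.sum, Finset.sum_mul]
            _ ≤ 2 * m := Nat.mul_le_mul_right _ hdeg
        omega
      refine ⟨C r * X (Sum.inl 0) ^ (δ - A) * X (Sum.inr 0) ^ (d - B) *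
        e.prod fun v c => g v ^ c, ?_, ?_⟩
      · -- homogeneity
        have hprod : IsWeightedHomogeneous w (e.prod fun v c => g v ^ c)
            (∑ v ∈ e.support, e v • W v) := by
          rw [Finsupp.prod]
          exact IsWeightedHomogeneous.prod _ _ _ fun v _ => aux_isWH_pow (hg v) (e v)
        have hsum : (∑ v ∈ e.support, e v • W v) = (A, B) := by
          rw [Prod.ext_iff, hAdef, hBdef, Finsupp.sum, Finsupp.sum]
          constructor
          · rw [Prod.fst_sum]; exact Finset.sum_congr rfl fun v _ => by simp
          · rw [Prod.snd_sum]; exact Finset.sum_congr rfl fun v _ => by simp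
        rw [hsum] at hprod
        have hfull := (((isWeightedHomogeneous_C w r).mul
          (aux_isWH_pow (isWeightedHomogeneous_X k w (Sum.inl 0)) (δ - A))).mul
          (aux_isWH_pow (isWeightedHomogeneous_X k w (Sum.inr 0)) (d - B))).mul hprod
        have hD : ((0 : ℕ × ℕ) + (δ - A) • w (Sum.inl 0) + (d - B) • w (Sum.inr 0) + (A, B))
            = ((δ : ℕ), (d : ℕ)) := by
          simp only [hw, Sum.elim_inl, Sum.elim_inr, Matrix.cons_val_zero, Prod.smul_mk,
            smul_eq_mul, mul_one, mul_zero, Prod.mk_add_mk, Prod.ext_iff, zero_add, add_zero]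
          omega
        exact hD ▸ hfull
      · -- evaluation
        have hprodeval : (aeval S) (e.prod fun v c => g v ^ c)
            = e.prod fun v c => X v ^ c := by
          rw [map_finsuppProd]
          exact Finsupp.prod_congr fun v _ => by rw [map_pow, hφg v]
        have heval : (aeval S) (C r * X (Sum.inl 0) ^ (δ - A) * X (Sum.inr 0) ^ (d - B) *
            e.prod fun v c => g v ^ c) = monomial e r := by
          rw [map_mul, map_mul, map_mul, hprodeval, map_pow, map_pow, aeval_X, aeval_X,
            hSx0, hSinr0, aeval_C, one_pow, one_pow, mul_one, mul_one, monomial_eq]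
          rfl
        rw [heval]
    · -- large degree: the monomial dies in the quotient
      refine ⟨0, isWeightedHomogeneous_zero k w _, ?_⟩
      rw [map_zero, RingHom.map_zero]
      symm
      rw [Ideal.Quotient.eq_zero_iff_mem]
      exact Ideal.pow_le_pow_right (by omega) (aux_monomial_mem_pow e r)
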